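/- For an integer k ≥ 3, Σ_{s=2}^{k-1} ζ(overline{k-s}, s̄) = ζ(k̄) + ζ(k-1, 1̄) - ζ(overline{k-1}, 1̄). -/

import Mathlib

open Filter Finset Real

/-- `zeta k` : the Riemann zeta value `ζ(k) = Σ_{m≥1} 1/m^k`, with the convention `ζ(0) = -1/2`. -/
noncomputable def zeta (k : ℕ) : ℝ :=
  if k = 0 then -1/2 else limUnder atTop (fun N => ∑ m ∈ Finset.range N, 1/((m+1 : ℝ))^k)

/-- `zetaA k` : the alternating zeta value `ζ(k̄) = Σ_{m≥1} (-1)^m/m^k`,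
with the convention `ζ(0̄) = -1/2`. -/
noncomputable def zetaA (k : ℕ) : ℝ :=
  if k = 0 then -1/2 else
    limUnder atTop (fun N => ∑ m ∈ Finset.range N, (-1 : ℝ)^(m+1)/((m+1 : ℝ))^k)

/-- `dzeta r s = ζ(r,s) = Σ_{m≥2} (1/m^s) Σ_{j=1}^{m-1} 1/j^r`. -/
noncomputable def dzeta (r s : ℕ) : ℝ :=
  limUnder atTop (fun N => ∑ m ∈ Finset.range N,
    (1/((m+2 : ℝ))^s) * ∑ j ∈ Finset.range (m+1), 1/((j+1 : ℝ))^r)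

/-- `dzetaA1 r s = ζ(r̄,s) = Σ_{m≥2} (1/m^s) Σ_{j=1}^{m-1} (-1)^j/j^r`. -/
noncomputable def dzetaA1 (r s : ℕ) : ℝ :=
  limUnder atTop (fun N => ∑ m ∈ Finset.range N,
    (1/((m+2 : ℝ))^s) * ∑ j ∈ Finset.range (m+1), (-1 : ℝ)^(j+1)/((j+1 : ℝ))^r)

/-- `dzetaA2 r s = ζ(r,s̄) = Σ_{m≥2} ((-1)^m/m^s) Σ_{j=1}^{m-1} 1/j^r`. -/
noncomputable def dzetaA2 (r s : ℕ) : ℝ :=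
  limUnder atTop (fun N => ∑ m ∈ Finset.range N,
    ((-1 : ℝ)^(m+2)/((m+2 : ℝ))^s) * ∑ j ∈ Finset.range (m+1), 1/((j+1 : ℝ))^r)

/-- `dzetaA3 r s = ζ(r̄,s̄) = Σ_{m≥2} ((-1)^m/m^s) Σ_{j=1}^{m-1} (-1)^j/j^r`. -/
noncomputable def dzetaA3 (r s : ℕ) : ℝ :=
  limUnder atTop (fun N => ∑ m ∈ Finset.range N,
    ((-1 : ℝ)^(m+2)/((m+2 : ℝ))^s) * ∑ j ∈ Finset.range (m+1), (-1 : ℝ)^(j+1)/((j+1 : ℝ))^r)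

open Topology

lemma alt_mono_aux (h : ℕ → ℝ) : ∀ N : ℕ, (∀ n, n ≤ N → 0 ≤ h n) →
    (∀ n, n < N → h n ≤ h (n+1)) →
    0 ≤ (-1:ℝ)^N * (∑ n ∈ Finset.range N, (-1:ℝ)^(n+1) * h n) ∧
      (-1:ℝ)^N * (∑ n ∈ Finset.range N, (-1:ℝ)^(n+1) * h n) ≤ h N := by
  intro N
  induction N with
  | zero => intro h0 _; simpa using h0 0 le_rfl
  | succ N ih =>
    intro h0 hm
    obtain ⟨ih1, ih2⟩ := ih (fun n hn => h0 n (hn.trans (Nat.le_succ N)))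
      (fun n hn => hm n (hn.trans_le (Nat.le_succ N)))
    rw [Finset.sum_range_succ]
    have he : (-1:ℝ)^N * (-1:ℝ)^N = 1 := by
      rw [← pow_add]
      exact Even.neg_one_pow ⟨N, by omega⟩
    have expand : (-1:ℝ)^(N+1) * ((∑ n ∈ Finset.range N, (-1:ℝ)^(n+1) * h n)
        + (-1:ℝ)^(N+1) * h N)
        = h N - (-1:ℝ)^N * (∑ n ∈ Finset.range N, (-1:ℝ)^(n+1) * h n) := by
      rw [pow_succ]
      linear_combination (h N) * he
    rw [expand]
    exact ⟨by linarith, by linarith [hm N (Nat.lt_succ_self N)]⟩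

lemma alt_mono_bound (h : ℕ → ℝ) (N : ℕ) (h0 : ∀ n, n ≤ N → 0 ≤ h n)
    (hm : ∀ n, n < N → h n ≤ h (n+1)) :
    |∑ n ∈ Finset.range N, (-1:ℝ)^(n+1) * h n| ≤ h N := by
  obtain ⟨h1, h2⟩ := alt_mono_aux h N h0 hm
  have habs : |(-1:ℝ)^N * (∑ n ∈ Finset.range N, (-1:ℝ)^(n+1) * h n)|
      = |∑ n ∈ Finset.range N, (-1:ℝ)^(n+1) * h n| := by
    rw [abs_mul, abs_pow, abs_neg, abs_one, one_pow, one_mul]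
  rw [← habs, abs_of_nonneg h1]
  exact h2

lemma alt_anti_aux (g : ℕ → ℝ) (g0 : ∀ n, 0 ≤ g n) (ga : ∀ n, g (n+1) ≤ g n) :
    ∀ N : ℕ, 0 ≤ ∑ j ∈ Finset.range N, (-1:ℝ)^j * g j ∧
      ∑ j ∈ Finset.range N, (-1:ℝ)^j * g j ≤ g 0 := by
  have key : ∀ N : ℕ,
      (if Even N then (0:ℝ) else g N) ≤ ∑ j ∈ Finset.range N, (-1:ℝ)^j * g j ∧
      ∑ j ∈ Finset.range N, (-1:ℝ)^j * g j ≤ g 0 - (if Even N then g N else 0) := by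
    intro N
    induction N with
    | zero => simp
    | succ N ih =>
      obtain ⟨ih1, ih2⟩ := ih
      rw [Finset.sum_range_succ]
      rcases Nat.even_or_odd N with hN | hN
      · have hp : (-1:ℝ)^N = 1 := hN.neg_one_pow
        have hev : ¬ Even (N+1) := by simp [Nat.even_add_one, hN]
        rw [if_pos hN] at ih1 ih2
        rw [hp, if_neg hev, if_neg hev]
        exact ⟨by linarith [ga N], by linarith⟩
      · have hp : (-1:ℝ)^N = -1 := hN.neg_one_pow
        have hev : Even (N+1) := Odd.add_one hN
        rw [if_neg (Nat.not_even_iff_odd.mpr hN)] at ih1 ih2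
        rw [hp, if_pos hev, if_pos hev]
        exact ⟨by linarith, by linarith [ga N]⟩
  intro N
  obtain ⟨h1, h2⟩ := key N
  constructor
  · refine le_trans ?_ h1
    split_ifs with h
    · exact le_refl 0
    · exact g0 N
  · refine h2.trans ?_
    split_ifs with h
    · linarith [g0 N]
    · linarith

lemma alt_anti_bound (g : ℕ → ℝ) (g0 : ∀ n, 0 ≤ g n) (ga : ∀ n, g (n+1) ≤ g n) (N : ℕ) :
    |∑ j ∈ Finset.range N, (-1:ℝ)^(j+1) * g j| ≤ g 0 := by
  have hterm : ∀ j ∈ Finset.range N, (-1:ℝ)^(j+1) * g j = -((-1:ℝ)^j * g j) := by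
    intro j _; rw [pow_succ]; ring
  rw [Finset.sum_congr rfl hterm, Finset.sum_neg_distrib, abs_neg]
  obtain ⟨h1, h2⟩ := alt_anti_aux g g0 ga N
  rwa [abs_of_nonneg h1]

lemma sum_triangle (f : ℕ → ℕ → ℝ) (N : ℕ) :
    ∑ m ∈ Finset.range N, ∑ j ∈ Finset.range (m+1), f j m
      = ∑ j ∈ Finset.range N, ∑ m ∈ Finset.Ico j N, f j m := by
  induction N with
  | zero => simp
  | succ N ih =>
    rw [Finset.sum_range_succ, ih]
    have step : ∀ j ∈ Finset.range (N+1), ∑ m ∈ Finset.Ico j (N+1), f j m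
        = (∑ m ∈ Finset.Ico j N, f j m) + f j N := by
      intro j hj
      exact Finset.sum_Ico_succ_top (Nat.lt_succ_iff.mp (Finset.mem_range.mp hj)) _
    rw [Finset.sum_congr rfl step, Finset.sum_add_distrib,
      Finset.sum_range_succ (fun j => ∑ m ∈ Finset.Ico j N, f j m)]
    simp [Finset.Ico_self]

lemma telescope_sum (K : ℕ) (a b : ℝ) (ha : 1 ≤ a) (hab : a < b) :
    ∑ s ∈ Finset.Icc 2 (K+1), 1/(a^(K+2-s) * b^s)
      = 1/((b-a)*a^(K+1)) - 1/((b-a)*b^(K+1)) - 1/(a^(K+1)*b) := by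
  have ha0 : (0:ℝ) < a := by linarith
  have hb0 : (0:ℝ) < b := by linarith
  have hba : (0:ℝ) < b - a := by linarith
  rw [← Finset.Ico_add_one_right_eq_Icc, Finset.sum_Ico_eq_sum_range]
  have hrange : K + 1 + 1 - 2 = K := by omega
  rw [hrange]
  have hterm : ∀ i ∈ Finset.range K, 1/(a^(K+2-(2+i)) * b^(2+i))
      = (1/(a^(K-i) * b^(i+1)) - 1/(a^(K-(i+1)) * b^((i+1)+1))) / (b - a) := by
    intro i hi
    have hiK : i < K := Finset.mem_range.mp hi
    have h1 : K + 2 - (2+i) = K - i := by omega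
    have h2 : 2 + i = i + 2 := by omega
    have h3 : K - i = (K - (i+1)) + 1 := by omega
    rw [h1, h2, h3, pow_succ, pow_succ, pow_succ]
    field_simp
  rw [Finset.sum_congr rfl hterm, ← Finset.sum_div,
    Finset.sum_range_sub' (fun i => 1/(a^(K-i) * b^(i+1)))]
  have h4 : K - K = 0 := by omega
  have h5 : a^(K+1) = a^K * a := pow_succ a K
  have h6 : b^(K+1) = b^K * b := pow_succ b K
  rw [h4, h5, h6, Nat.sub_zero]
  field_simp
  ring

lemma sum_sq_bound (M : ℕ) : ∑ j ∈ Finset.range M, 1/((j:ℝ)+1)^2 ≤ 2 := by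
  have key : ∀ M : ℕ, ∑ j ∈ Finset.range M, 1/((j:ℝ)+1)^2 ≤ 2 - 2/((M:ℝ)+1) := by
    intro M
    induction M with
    | zero => simp
    | succ M ih =>
      rw [Finset.sum_range_succ]
      have hM0 : (0:ℝ) < (M:ℝ)+1 := by positivity
      have hM1 : (0:ℝ) < (M:ℝ)+2 := by positivity
      have hkey : 1/((M:ℝ)+1)^2 ≤ 2/((M:ℝ)+1) - 2/((M:ℝ)+2) := by
        rw [div_sub_div _ _ (ne_of_gt hM0) (ne_of_gt hM1), div_le_div_iff₀ (by positivity) (by positivity)]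
        nlinarith
      push_cast
      have hcast : (2:ℝ)/((M:ℝ)+1+1) = 2/((M:ℝ)+2) := by ring_nf
      linarith
  refine (key M).trans ?_
  have : (0:ℝ) ≤ 2/((M:ℝ)+1) := by positivity
  linarith

noncomputable def pP (r s N : ℕ) : ℝ := ∑ m ∈ Finset.range N,
  ((-1 : ℝ)^(m+2)/((m+2 : ℝ))^s) * ∑ j ∈ Finset.range (m+1), (-1 : ℝ)^(j+1)/((j+1 : ℝ))^r

noncomputable def pC (r N : ℕ) : ℝ := ∑ m ∈ Finset.range N,
  ((-1 : ℝ)^(m+2)/((m+2 : ℝ))^1) * ∑ j ∈ Finset.range (m+1), 1/((j+1 : ℝ))^r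

noncomputable def pB (k N : ℕ) : ℝ := ∑ m ∈ Finset.range N, (-1 : ℝ)^(m+1)/((m+1 : ℝ))^k

noncomputable def TT (k M : ℕ) : ℝ := ∑ j ∈ Finset.range M, 1/((j+1 : ℝ))^(k-1)

noncomputable def EE (k N : ℕ) : ℝ := ∑ j ∈ Finset.range N,
  ((-1 : ℝ)^(j+1)/((j+1 : ℝ))) * (TT k (N+1) - TT k (N-j))

lemma sign_mj (m j : ℕ) : (-1:ℝ)^(m+2) * (-1:ℝ)^(j+1) = (-1:ℝ)^(m+j+1) := by
  rw [← pow_add, show (m+2)+(j+1) = (m+j+1)+2 from by omega, pow_add]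
  norm_num

lemma step1 (k : ℕ) (hk : 3 ≤ k) (N : ℕ) :
    ∑ s ∈ Finset.Icc 2 (k-1), pP (k-s) s N
      = (∑ m ∈ Finset.range N, ∑ j ∈ Finset.range (m+1),
          (-1:ℝ)^(m+j+1) / ((((m:ℝ)+2)-((j:ℝ)+1)) * ((j:ℝ)+1)^(k-1)))
      - (∑ m ∈ Finset.range N, ∑ j ∈ Finset.range (m+1),
          (-1:ℝ)^(m+j+1) / ((((m:ℝ)+2)-((j:ℝ)+1)) * ((m:ℝ)+2)^(k-1)))
      - pP (k-1) 1 N := by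
  simp only [pP]
  rw [Finset.sum_comm]
  have inner : ∀ m ∈ Finset.range N,
      ∑ s ∈ Finset.Icc 2 (k-1),
        ((-1 : ℝ)^(m+2)/((m+2 : ℝ))^s) * ∑ j ∈ Finset.range (m+1), (-1 : ℝ)^(j+1)/((j+1 : ℝ))^(k-s)
      = ∑ j ∈ Finset.range (m+1),
        ((-1:ℝ)^(m+j+1) / ((((m:ℝ)+2)-((j:ℝ)+1)) * ((j:ℝ)+1)^(k-1))
         - (-1:ℝ)^(m+j+1) / ((((m:ℝ)+2)-((j:ℝ)+1)) * ((m:ℝ)+2)^(k-1))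
         - ((-1 : ℝ)^(m+2)/((m+2 : ℝ))^1) * ((-1 : ℝ)^(j+1)/((j+1 : ℝ))^(k-1))) := by
    intro m _
    have swap : ∑ s ∈ Finset.Icc 2 (k-1),
        ((-1 : ℝ)^(m+2)/((m+2 : ℝ))^s) * ∑ j ∈ Finset.range (m+1), (-1 : ℝ)^(j+1)/((j+1 : ℝ))^(k-s)
        = ∑ j ∈ Finset.range (m+1), (-1:ℝ)^(m+j+1) *
            ∑ s ∈ Finset.Icc 2 (k-1), 1/(((j:ℝ)+1)^(k-s) * ((m:ℝ)+2)^s) := by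
      simp only [Finset.mul_sum]
      rw [Finset.sum_comm]
      refine Finset.sum_congr rfl fun j _ => ?_
      refine Finset.sum_congr rfl fun s _ => ?_
      rw [← sign_mj m j]
      push_cast
      ring
    rw [swap]
    refine Finset.sum_congr rfl fun j hj => ?_
    have hjm : j ≤ m := Nat.lt_succ_iff.mp (Finset.mem_range.mp hj)
    have ha : (1:ℝ) ≤ (j:ℝ)+1 := by
      have := Nat.cast_nonneg (α := ℝ) j; linarith
    have hab : (j:ℝ)+1 < (m:ℝ)+2 := by
      have : (j:ℝ) ≤ (m:ℝ) := by exact_mod_cast hjm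
      linarith
    have tel := telescope_sum (k-2) ((j:ℝ)+1) ((m:ℝ)+2) ha hab
    rw [show k-2+1 = k-1 from by omega] at tel
    simp only [show k-2+2 = k from by omega] at tel
    have hA : (((j:ℝ)+1))^(k-1) ≠ 0 := by positivity
    have hB : (((m:ℝ)+2))^(k-1) ≠ 0 := by positivity
    have hm2 : ((m:ℝ)+2) ≠ 0 := by positivity
    have hc : ((m:ℝ)+2) - ((j:ℝ)+1) ≠ 0 := ne_of_gt (by linarith)
    have hz : ((-1 : ℝ)^(m+2)/((m+2 : ℝ))^1) * ((-1 : ℝ)^(j+1)/((j+1 : ℝ))^(k-1))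
        = (-1:ℝ)^(m+j+1) * (1/((((j:ℝ)+1))^(k-1) * ((m:ℝ)+2))) := by
      rw [← sign_mj m j, pow_one]
      field_simp
    rw [tel, hz]
    field_simp
  rw [Finset.sum_congr rfl inner]
  simp only [Finset.sum_sub_distrib]
  congr 1
  refine Finset.sum_congr rfl fun m _ => ?_
  rw [Finset.mul_sum]

lemma step2 (k N : ℕ) :
    ∑ m ∈ Finset.range N, ∑ j ∈ Finset.range (m+1),
        (-1:ℝ)^(m+j+1) / ((((m:ℝ)+2)-((j:ℝ)+1)) * ((j:ℝ)+1)^(k-1))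
      = ∑ j ∈ Finset.range N, ((-1:ℝ)^(j+1)/((j:ℝ)+1)) * TT k (N-j) := by
  have refl_step : ∀ m ∈ Finset.range N, ∑ j ∈ Finset.range (m+1),
      (-1:ℝ)^(m+j+1) / ((((m:ℝ)+2)-((j:ℝ)+1)) * ((j:ℝ)+1)^(k-1))
      = ∑ j ∈ Finset.range (m+1), ((-1:ℝ)^(j+1)/((j:ℝ)+1)) * (1/((((m:ℝ)-(j:ℝ))+1)^(k-1))) := by
    intro m _
    rw [← Finset.sum_range_reflect (fun j => ((-1:ℝ)^(j+1)/((j:ℝ)+1)) * (1/((((m:ℝ)-(j:ℝ))+1)^(k-1)))) (m+1)]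
    refine Finset.sum_congr rfl fun j hj => ?_
    have hjm : j ≤ m := Nat.lt_succ_iff.mp (Finset.mem_range.mp hj)
    have hidx : m + 1 - 1 - j = m - j := by omega
    rw [hidx, Nat.cast_sub hjm]
    have hsign : (-1:ℝ)^(m+j+1) = (-1:ℝ)^((m-j)+1) * (-1:ℝ)^(2*j) := by
      rw [← pow_add, show (m-j)+1+2*j = m+j+1 from by omega]
    have h2j : (-1:ℝ)^(2*j) = 1 := by
      rw [pow_mul]; norm_num
    rw [hsign, h2j, mul_one]
    have hjR : (j:ℝ) ≤ (m:ℝ) := by exact_mod_cast hjm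
    have e2 : (m:ℝ) - ((m:ℝ)-(j:ℝ)) + 1 = (j:ℝ)+1 := by ring
    have e3 : ((m:ℝ)+2)-((j:ℝ)+1) = ((m:ℝ)-(j:ℝ))+1 := by ring
    rw [e2, e3]
    have hd : ((m:ℝ)-(j:ℝ))+1 ≠ 0 := by
      intro h; nlinarith
    have hA : ((j:ℝ)+1)^(k-1) ≠ 0 := by positivity
    field_simp
  rw [Finset.sum_congr rfl refl_step,
    sum_triangle (fun j m => ((-1:ℝ)^(j+1)/((j:ℝ)+1)) * (1/((((m:ℝ)-(j:ℝ))+1)^(k-1)))) N]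
  refine Finset.sum_congr rfl fun j hj => ?_
  rw [← Finset.mul_sum, Finset.sum_Ico_eq_sum_range]
  congr 1
  unfold TT
  refine Finset.sum_congr rfl fun i _ => ?_
  have : ((j:ℝ)+(i:ℝ))-(j:ℝ)+1 = (i:ℝ)+1 := by ring
  push_cast
  rw [this]

lemma step3 (k N : ℕ) (hk : 3 ≤ k) :
    ∑ m ∈ Finset.range N, ∑ j ∈ Finset.range (m+1),
        (-1:ℝ)^(m+j+1) / ((((m:ℝ)+2)-((j:ℝ)+1)) * ((m:ℝ)+2)^(k-1))
      = ∑ j ∈ Finset.range N, ((-1:ℝ)^(j+1)/((j:ℝ)+1)) * (TT k (N+1) - TT k (j+1)) := by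
  have refl_step : ∀ m ∈ Finset.range N, ∑ j ∈ Finset.range (m+1),
      (-1:ℝ)^(m+j+1) / ((((m:ℝ)+2)-((j:ℝ)+1)) * ((m:ℝ)+2)^(k-1))
      = ∑ j ∈ Finset.range (m+1), ((-1:ℝ)^(j+1)/((j:ℝ)+1)) * (1/(((m:ℝ)+2)^(k-1))) := by
    intro m _
    rw [← Finset.sum_range_reflect (fun j => ((-1:ℝ)^(j+1)/((j:ℝ)+1)) * (1/(((m:ℝ)+2)^(k-1)))) (m+1)]
    refine Finset.sum_congr rfl fun j hj => ?_
    have hjm : j ≤ m := Nat.lt_succ_iff.mp (Finset.mem_range.mp hj)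
    have hidx : m + 1 - 1 - j = m - j := by omega
    rw [hidx, Nat.cast_sub hjm]
    have hsign : (-1:ℝ)^(m+j+1) = (-1:ℝ)^((m-j)+1) * (-1:ℝ)^(2*j) := by
      rw [← pow_add, show (m-j)+1+2*j = m+j+1 from by omega]
    have h2j : (-1:ℝ)^(2*j) = 1 := by rw [pow_mul]; norm_num
    rw [hsign, h2j, mul_one]
    have hjR : (j:ℝ) ≤ (m:ℝ) := by exact_mod_cast hjm
    have e3 : ((m:ℝ)+2)-((j:ℝ)+1) = ((m:ℝ)-(j:ℝ))+1 := by ring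
    rw [e3]
    have hd : ((m:ℝ)-(j:ℝ))+1 ≠ 0 := by intro h; nlinarith
    have hpow : (((m:ℝ)+2))^(k-1) ≠ 0 := by positivity
    field_simp
  rw [Finset.sum_congr rfl refl_step,
    sum_triangle (fun j m => ((-1:ℝ)^(j+1)/((j:ℝ)+1)) * (1/(((m:ℝ)+2)^(k-1)))) N]
  refine Finset.sum_congr rfl fun j hj => ?_
  have hjN : j ≤ N := le_of_lt (Finset.mem_range.mp hj)
  rw [← Finset.mul_sum]
  congr 1
  have hrange : ∀ M : ℕ, ∑ m ∈ Finset.range M, 1/(((m:ℝ)+2)^(k-1)) = TT k (M+1) - 1 := by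
    intro M
    unfold TT
    rw [Finset.sum_range_succ']
    have h0 : 1/(((0:ℕ):ℝ)+1)^(k-1) = 1 := by norm_num
    have hterm : ∀ i, 1/((((i+1:ℕ)):ℝ)+1)^(k-1) = 1/(((i:ℝ)+2)^(k-1)) := by
      intro i; push_cast; ring_nf
    simp only [hterm]
    push_cast
    simp
  rw [Finset.sum_Ico_eq_sub _ hjN, hrange N, hrange j]
  ring

lemma TT_succ (k M : ℕ) : TT k (M+1) = TT k M + 1/((M+1 : ℝ))^(k-1) :=
  Finset.sum_range_succ _ M

lemma pC_shift (k : ℕ) (N : ℕ) :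
    ∑ j ∈ Finset.range N, ((-1:ℝ)^(j+1)/((j:ℝ)+1)) * TT k j = pC (k-1) (N-1) := by
  cases N with
  | zero => simp [pC]
  | succ P =>
    rw [Finset.sum_range_succ']
    have h0 : ((-1:ℝ)^(0+1)/((0:ℕ):ℝ)+1) * TT k 0 = 0 := by
      simp [TT]
    have : ((-1:ℝ)^(0+1)/(((0:ℕ):ℝ)+1)) * TT k 0 = 0 := by simp [TT]
    rw [this, add_zero]
    show _ = pC (k-1) P
    unfold pC
    refine Finset.sum_congr rfl fun m _ => ?_
    have hTT : TT k (m+1) = ∑ j ∈ Finset.range (m+1), 1/((j+1 : ℝ))^(k-1) := rfl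
    rw [hTT]
    have hc : (((m+1:ℕ)):ℝ)+1 = ((m:ℝ)+2)^1 := by push_cast; ring
    rw [show (m+1)+1 = m+2 from rfl, hc]

lemma finite_id (k : ℕ) (hk : 3 ≤ k) (N : ℕ) :
    ∑ s ∈ Finset.Icc 2 (k-1), pP (k-s) s N
      = pB k N + pC (k-1) (N-1) - pP (k-1) 1 N - EE k N := by
  rw [step1 k hk N, step2 k N, step3 k N hk]
  have comb : ∑ j ∈ Finset.range N, ((-1:ℝ)^(j+1)/((j:ℝ)+1)) * TT k (N-j)
      - ∑ j ∈ Finset.range N, ((-1:ℝ)^(j+1)/((j:ℝ)+1)) * (TT k (N+1) - TT k (j+1))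
      = (∑ j ∈ Finset.range N, ((-1:ℝ)^(j+1)/((j:ℝ)+1)) * TT k j) + pB k N - EE k N := by
    unfold pB EE
    rw [← Finset.sum_sub_distrib, ← Finset.sum_add_distrib, ← Finset.sum_sub_distrib]
    refine Finset.sum_congr rfl fun j _ => ?_
    rw [TT_succ k j]
    have hpow := pow_succ' ((j:ℝ)+1) (k-1)
    rw [show (k-1)+1 = k from by omega] at hpow
    have hne : ((j:ℝ)+1) ≠ 0 := by positivity
    have hne2 : ((j:ℝ)+1)^(k-1) ≠ 0 := by positivity
    rw [hpow]
    field_simp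
    ring
  rw [comb, pC_shift k N]
  ring

lemma TT_nonneg (k M : ℕ) : 0 ≤ TT k M := by
  unfold TT
  exact Finset.sum_nonneg fun j _ => by positivity

lemma TT_mono (k : ℕ) : Monotone (TT k) := by
  intro a b hab
  exact Finset.sum_le_sum_of_subset_of_nonneg (Finset.range_subset_range.mpr hab)
    (fun j _ _ => by positivity)

lemma TT_le (k : ℕ) (hk : 3 ≤ k) (M : ℕ) : TT k M ≤ 2 := by
  refine le_trans (Finset.sum_le_sum fun j (_ : j ∈ Finset.range M) => ?_) (sum_sq_bound M)
  have h1 : (1:ℝ) ≤ (j:ℝ)+1 := by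
    have := Nat.cast_nonneg (α := ℝ) j; linarith
  have : ((j:ℝ)+1)^2 ≤ ((j:ℝ)+1)^(k-1) := pow_le_pow_right₀ h1 (by omega)
  exact one_div_le_one_div_of_le (by positivity) this

lemma inner_alt_bound (r n : ℕ) : |∑ j ∈ Finset.range n, (-1:ℝ)^(j+1)/((j+1:ℝ))^r| ≤ 1 := by
  have hform : ∀ j ∈ Finset.range n, (-1:ℝ)^(j+1)/((j+1:ℝ))^r
      = (-1:ℝ)^(j+1) * (1/((j:ℝ)+1)^r) := by
    intro j _; rw [mul_one_div]
  rw [Finset.sum_congr rfl hform]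
  have hb := alt_anti_bound (fun j => 1/((j:ℝ)+1)^r) (fun j => by positivity)
    (fun j => by
      have h0 : (0:ℝ) < ((j:ℝ)+1)^r := by positivity
      apply one_div_le_one_div_of_le h0
      exact pow_le_pow_left₀ (by positivity) (by push_cast; linarith) r) n
  simpa using hb

lemma abs_sum_neg_one_pow_Ico (a b : ℕ) : |∑ i ∈ Finset.Ico a b, (-1:ℝ)^i| ≤ 1 := by
  rw [Finset.sum_Ico_eq_sum_range]
  have hform : ∀ i ∈ Finset.range (b-a), (-1:ℝ)^(a+i) = (-1:ℝ)^a * (-1:ℝ)^i := by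
    intro i _; rw [pow_add]
  rw [Finset.sum_congr rfl hform, ← Finset.mul_sum, abs_mul, abs_pow, abs_neg, abs_one, one_pow,
    one_mul, neg_one_geom_sum]
  split_ifs <;> norm_num

lemma summable_base : Summable (fun m : ℕ => 1/((m:ℝ)+1)^2) := by
  have h := summable_one_div_nat_pow.mpr (one_lt_two : 1 < 2)
  have h2 := (summable_nat_add_iff 1).mpr h
  refine h2.congr fun m => ?_
  push_cast
  ring

lemma tendsto_pP (r s : ℕ) (hs : 2 ≤ s) :
    ∃ l, Tendsto (fun N => pP r s N) atTop (𝓝 l) := by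
  have hsum : Summable (fun m : ℕ =>
      ((-1 : ℝ)^(m+2)/((m+2 : ℝ))^s) * ∑ j ∈ Finset.range (m+1), (-1 : ℝ)^(j+1)/((j+1 : ℝ))^r) := by
    refine Summable.of_norm_bounded summable_base fun m => ?_
    rw [norm_mul, norm_div, norm_pow, norm_neg, norm_one, one_pow]
    have h1 : ‖((m:ℝ)+2)^s‖ = ((m:ℝ)+2)^s := by
      rw [Real.norm_eq_abs, abs_of_nonneg (by positivity)]
    rw [h1, Real.norm_eq_abs]
    have h2 : |∑ j ∈ Finset.range (m+1), (-1 : ℝ)^(j+1)/((j+1 : ℝ))^r| ≤ 1 :=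
      inner_alt_bound r (m+1)
    have h3 : ((m:ℝ)+1)^2 ≤ ((m:ℝ)+2)^s := by
      calc ((m:ℝ)+1)^2 ≤ ((m:ℝ)+2)^2 := by
              apply pow_le_pow_left₀ (by positivity); linarith
        _ ≤ ((m:ℝ)+2)^s := pow_le_pow_right₀ (by linarith [Nat.cast_nonneg (α := ℝ) m]) hs
    have h4 : (0:ℝ) < ((m:ℝ)+2)^s := by positivity
    have h5 : (0:ℝ) < ((m:ℝ)+1)^2 := by positivity
    calc 1/((m:ℝ)+2)^s * |∑ j ∈ Finset.range (m+1), (-1 : ℝ)^(j+1)/((j+1 : ℝ))^r|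
        ≤ 1/((m:ℝ)+2)^s * 1 := by
          apply mul_le_mul_of_nonneg_left h2 (by positivity)
      _ = 1/((m:ℝ)+2)^s := mul_one _
      _ ≤ 1/((m:ℝ)+1)^2 := one_div_le_one_div_of_le h5 h3
  exact ⟨_, hsum.hasSum.tendsto_sum_nat⟩

lemma tendsto_pB (k : ℕ) (hk : 3 ≤ k) :
    ∃ l, Tendsto (fun N => pB k N) atTop (𝓝 l) := by
  have hsum : Summable (fun m : ℕ => (-1 : ℝ)^(m+1)/((m+1 : ℝ))^k) := by
    refine Summable.of_norm_bounded summable_base fun m => ?_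
    rw [norm_div, norm_pow, norm_neg, norm_one, one_pow]
    have h1 : ‖((m:ℝ)+1)^k‖ = ((m:ℝ)+1)^k := by
      rw [Real.norm_eq_abs, abs_of_nonneg (by positivity)]
    rw [h1]
    apply one_div_le_one_div_of_le (by positivity)
    apply pow_le_pow_right₀ (by linarith [Nat.cast_nonneg (α := ℝ) m]) (by omega)
  exact ⟨_, hsum.hasSum.tendsto_sum_nat⟩

lemma f_anti : Antitone (fun i : ℕ => 1/((i:ℝ)+2)) := by
  intro a b hab
  apply one_div_le_one_div_of_le (by positivity)
  have : (a:ℝ) ≤ (b:ℝ) := by exact_mod_cast hab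
  linarith

lemma f_zero : Tendsto (fun i : ℕ => 1/((i:ℝ)+2)) atTop (𝓝 0) := by
  apply squeeze_zero (fun n => by positivity) (fun n => ?_)
    tendsto_one_div_add_atTop_nhds_zero_nat
  apply one_div_le_one_div_of_le (by positivity)
  linarith

lemma tendsto_pC (k : ℕ) (hk : 3 ≤ k) :
    ∃ l, Tendsto (fun N => pC (k-1) N) atTop (𝓝 l) := by
  have hbound : ∀ n, ‖∑ i ∈ Finset.range n, (-1:ℝ)^(i+2) * TT k (i+1)‖ ≤ 2 := by
    intro n
    have hform : ∀ i ∈ Finset.range n, (-1:ℝ)^(i+2) * TT k (i+1)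
        = -((-1:ℝ)^(i+1) * TT k (i+1)) := by
      intro i _
      rw [show i+2 = (i+1)+1 from rfl, pow_succ]
      ring
    rw [Finset.sum_congr rfl hform, Finset.sum_neg_distrib, norm_neg, Real.norm_eq_abs]
    refine le_trans (alt_mono_bound (fun i => TT k (i+1)) n
      (fun i _ => TT_nonneg k (i+1)) (fun i _ => TT_mono k (by omega))) ?_
    exact TT_le k hk (n+1)
  have key : CauchySeq (fun n => ∑ i ∈ Finset.range n,
      (fun i : ℕ => 1/((i:ℝ)+2)) i • (fun i : ℕ => (-1:ℝ)^(i+2) * TT k (i+1)) i) :=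
    f_anti.cauchySeq_series_mul_of_tendsto_zero_of_bounded f_zero hbound
  have heq : (fun N => pC (k-1) N) = (fun n => ∑ i ∈ Finset.range n,
      (fun i : ℕ => 1/((i:ℝ)+2)) i • (fun i : ℕ => (-1:ℝ)^(i+2) * TT k (i+1)) i) := by
    funext n
    unfold pC
    refine Finset.sum_congr rfl fun m _ => ?_
    have hTT : TT k (m+1) = ∑ j ∈ Finset.range (m+1), 1/((j+1 : ℝ))^(k-1) := rfl
    simp only [smul_eq_mul]
    rw [pow_one, ← hTT]
    ring
  obtain ⟨l, hl⟩ := cauchySeq_tendsto_of_complete key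
  exact ⟨l, heq ▸ hl⟩

lemma tendsto_pD (k : ℕ) (hk : 3 ≤ k) :
    ∃ l, Tendsto (fun N => pP (k-1) 1 N) atTop (𝓝 l) := by
  have hbound : ∀ n, ‖∑ i ∈ Finset.range n,
      (-1:ℝ)^(i+2) * ∑ j ∈ Finset.range (i+1), (-1 : ℝ)^(j+1)/((j+1 : ℝ))^(k-1)‖ ≤ 2 := by
    intro n
    have hform : ∀ i ∈ Finset.range n,
        (-1:ℝ)^(i+2) * ∑ j ∈ Finset.range (i+1), (-1 : ℝ)^(j+1)/((j+1 : ℝ))^(k-1)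
        = ∑ j ∈ Finset.range (i+1), ((-1 : ℝ)^(j+1)/((j+1 : ℝ))^(k-1)) * (-1:ℝ)^i := by
      intro i _
      rw [Finset.mul_sum]
      refine Finset.sum_congr rfl fun j _ => ?_
      rw [pow_add]
      push_cast
      ring
    rw [Finset.sum_congr rfl hform,
      sum_triangle (fun j i => ((-1 : ℝ)^(j+1)/((j+1 : ℝ))^(k-1)) * (-1:ℝ)^i) n]
    rw [Real.norm_eq_abs]
    refine le_trans (Finset.abs_sum_le_sum_abs _ _) ?_
    refine le_trans (Finset.sum_le_sum (fun j (_ : j ∈ Finset.range n) => ?_)) (sum_sq_bound n)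
    rw [← Finset.mul_sum, abs_mul]
    have h2 : |∑ i ∈ Finset.Ico j n, (-1:ℝ)^i| ≤ 1 := abs_sum_neg_one_pow_Ico j n
    have h3 : |(-1 : ℝ)^(j+1)/((j+1 : ℝ))^(k-1)| = 1/((j:ℝ)+1)^(k-1) := by
      rw [abs_div, abs_pow, abs_neg, abs_one, one_pow, abs_of_nonneg (by positivity : (0:ℝ) ≤ ((j:ℝ)+1)^(k-1))]
    rw [h3]
    have h4 : 1/((j:ℝ)+1)^(k-1) ≤ 1/((j:ℝ)+1)^2 := by
      apply one_div_le_one_div_of_le (by positivity)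
      exact pow_le_pow_right₀ (by linarith [Nat.cast_nonneg (α := ℝ) j]) (by omega)
    calc 1/((j:ℝ)+1)^(k-1) * |∑ i ∈ Finset.Ico j n, (-1:ℝ)^i|
        ≤ 1/((j:ℝ)+1)^(k-1) * 1 := mul_le_mul_of_nonneg_left h2 (by positivity)
      _ = 1/((j:ℝ)+1)^(k-1) := mul_one _
      _ ≤ 1/((j:ℝ)+1)^2 := h4
  have key : CauchySeq (fun n => ∑ i ∈ Finset.range n,
      (fun i : ℕ => 1/((i:ℝ)+2)) i • (fun i : ℕ =>
        (-1:ℝ)^(i+2) * ∑ j ∈ Finset.range (i+1), (-1 : ℝ)^(j+1)/((j+1 : ℝ))^(k-1)) i) :=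
    f_anti.cauchySeq_series_mul_of_tendsto_zero_of_bounded f_zero hbound
  have heq : (fun N => pP (k-1) 1 N) = (fun n => ∑ i ∈ Finset.range n,
      (fun i : ℕ => 1/((i:ℝ)+2)) i • (fun i : ℕ =>
        (-1:ℝ)^(i+2) * ∑ j ∈ Finset.range (i+1), (-1 : ℝ)^(j+1)/((j+1 : ℝ))^(k-1)) i) := by
    funext n
    unfold pP
    refine Finset.sum_congr rfl fun m _ => ?_
    simp only [smul_eq_mul]
    rw [pow_one]
    ring
  obtain ⟨l, hl⟩ := cauchySeq_tendsto_of_complete key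
  exact ⟨l, heq ▸ hl⟩

lemma EE_bound (k : ℕ) (hk : 3 ≤ k) (N : ℕ) : |EE k N| ≤ 2/((N:ℝ)+1) := by
  have hEform : EE k N = ∑ j ∈ Finset.range N,
      (-1:ℝ)^(j+1) * ((TT k (N+1) - TT k (N-j))/((j:ℝ)+1)) := by
    unfold EE
    refine Finset.sum_congr rfl fun j _ => ?_
    push_cast
    ring
  rw [hEform]
  have h0 : ∀ n, n ≤ N → 0 ≤ (TT k (N+1) - TT k (N-n))/((n:ℝ)+1) := by
    intro n _
    have h1 : TT k (N-n) ≤ TT k (N+1) := TT_mono k (by omega)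
    have h2 : (0:ℝ) < (n:ℝ)+1 := by positivity
    exact div_nonneg (by linarith) (by linarith)
  have hm : ∀ n, n < N → (TT k (N+1) - TT k (N-n))/((n:ℝ)+1)
      ≤ (TT k (N+1) - TT k (N-(n+1)))/(((n+1:ℕ):ℝ)+1) := by
    intro n hn
    have e1 : N - n = (N - (n+1)) + 1 := by omega
    have hTs : TT k (N-n) = TT k (N-(n+1)) + 1/(((N-(n+1):ℕ):ℝ)+1)^(k-1) := by
      rw [e1, TT_succ]
    set δ := 1/(((N-(n+1):ℕ):ℝ)+1)^(k-1) with hδ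
    have hkey : TT k (N+1) - TT k (N-n) ≤ ((n:ℝ)+1) * δ := by
      have hsub : TT k (N+1) - TT k (N-n)
          = ∑ j ∈ Finset.Ico (N-n) (N+1), 1/((j+1 : ℝ))^(k-1) := by
        rw [Finset.sum_Ico_eq_sub _ (show N-n ≤ N+1 by omega)]
        rfl
      rw [hsub]
      have hcard : (Finset.Ico (N-n) (N+1)).card = n+1 := by
        rw [Nat.card_Ico]; omega
      have hbd : ∀ j ∈ Finset.Ico (N-n) (N+1), 1/((j+1 : ℝ))^(k-1) ≤ δ := by
        intro j hj
        obtain ⟨hj1, hj2⟩ := Finset.mem_Ico.mp hj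
        rw [hδ]
        apply one_div_le_one_div_of_le (by positivity)
        apply pow_le_pow_left₀ (by positivity)
        have : N-(n+1) ≤ j := by omega
        have := (Nat.cast_le (α := ℝ)).mpr this
        linarith
      calc ∑ j ∈ Finset.Ico (N-n) (N+1), 1/((j+1 : ℝ))^(k-1)
          ≤ (Finset.Ico (N-n) (N+1)).card • δ := Finset.sum_le_card_nsmul _ _ _ hbd
        _ = ((n:ℝ)+1) * δ := by rw [hcard, nsmul_eq_mul]; push_cast; ring
    rw [hTs]
    rw [div_le_div_iff₀ (by positivity) (by push_cast; positivity)]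
    push_cast
    nlinarith [hkey]
  have := alt_mono_bound (fun n => (TT k (N+1) - TT k (N-n))/((n:ℝ)+1)) N h0 hm
  refine le_trans this ?_
  show (TT k (N+1) - TT k (N-N))/((N:ℝ)+1) ≤ 2/((N:ℝ)+1)
  have hTT0 : TT k (N-N) = 0 := by
    rw [show N-N = 0 from by omega]
    simp [TT]
  rw [hTT0, sub_zero]
  have := TT_le k hk (N+1)
  gcongr

lemma tendsto_EE (k : ℕ) (hk : 3 ≤ k) : Tendsto (fun N => EE k N) atTop (𝓝 0) := by
  have h2 : Tendsto (fun N : ℕ => 2 * (1/((N:ℝ)+1))) atTop (𝓝 (2 * 0)) :=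
    tendsto_one_div_add_atTop_nhds_zero_nat.const_mul 2
  refine squeeze_zero_norm (fun N => ?_) (by simpa [mul_one_div] using h2)
  rw [Real.norm_eq_abs]
  simpa [mul_one_div, div_eq_mul_inv] using EE_bound k hk N

theorem alt_sum_formula_2 (k : ℕ) (hk : 3 ≤ k) :
    ∑ s ∈ Finset.Icc 2 (k-1), dzetaA3 (k-s) s
      = zetaA k + dzetaA2 (k-1) 1 - dzetaA3 (k-1) 1 := by
  obtain ⟨b, hb⟩ := tendsto_pB k hk
  obtain ⟨c, hc⟩ := tendsto_pC k hk
  obtain ⟨d, hd⟩ := tendsto_pD k hk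
  have hE := tendsto_EE k hk
  have hsum : Tendsto (fun N => ∑ s ∈ Finset.Icc 2 (k-1), pP (k-s) s N) atTop
      (𝓝 (∑ s ∈ Finset.Icc 2 (k-1), limUnder atTop (fun N => pP (k-s) s N))) := by
    refine tendsto_finset_sum _ fun s hs => ?_
    exact tendsto_nhds_limUnder (tendsto_pP (k-s) s (Finset.mem_Icc.mp hs).1)
  have hRHS : Tendsto (fun N => pB k N + pC (k-1) (N-1) - pP (k-1) 1 N - EE k N) atTop
      (𝓝 (b + c - d - 0)) := by
    refine Tendsto.sub (Tendsto.sub (Tendsto.add hb ?_) hd) hE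
    exact hc.comp (tendsto_sub_atTop_nat 1)
  have hfun : (fun N => ∑ s ∈ Finset.Icc 2 (k-1), pP (k-s) s N)
      = (fun N => pB k N + pC (k-1) (N-1) - pP (k-1) 1 N - EE k N) :=
    funext (finite_id k hk)
  have hsum2 : Tendsto (fun N => pB k N + pC (k-1) (N-1) - pP (k-1) 1 N - EE k N) atTop
      (𝓝 (∑ s ∈ Finset.Icc 2 (k-1), limUnder atTop (fun N => pP (k-s) s N))) := by
    rw [← hfun]; exact hsum
  have hkey : (∑ s ∈ Finset.Icc 2 (k-1), limUnder atTop (fun N => pP (k-s) s N))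
      = b + c - d - 0 := tendsto_nhds_unique hsum2 hRHS
  have e1 : ∑ s ∈ Finset.Icc 2 (k-1), dzetaA3 (k-s) s
      = ∑ s ∈ Finset.Icc 2 (k-1), limUnder atTop (fun N => pP (k-s) s N) :=
    Finset.sum_congr rfl fun s _ => rfl
  have e2 : zetaA k = b := by
    have h : zetaA k = limUnder atTop (fun N => pB k N) := by
      unfold zetaA pB
      rw [if_neg (by omega : ¬ k = 0)]
    rw [h, hb.limUnder_eq]
  have e3 : dzetaA2 (k-1) 1 = c := by
    have h : dzetaA2 (k-1) 1 = limUnder atTop (fun N => pC (k-1) N) := rfl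
    rw [h, hc.limUnder_eq]
  have e4 : dzetaA3 (k-1) 1 = d := by
    have h : dzetaA3 (k-1) 1 = limUnder atTop (fun N => pP (k-1) 1 N) := rfl
    rw [h, hd.limUnder_eq]
  rw [e1, hkey, e2, e3, e4]
  ring
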